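/- Let γ ∈ (1,2). Then the WSGD weights are absolutely summable, and their absolute sum equals ∑_{k=0}^∞ |w_k^{(γ)}| = γ² + γ - 2 + (γ/4)·( |γ²+γ-4| - (γ²+γ-4) ). In particular the function f_γ(ξ) = -∑_{k=-1}^∞ w_{k+1}^{(γ)} e^{i k ξ} is well defined (the series converges absolutely and uniformly in ξ), i.e. f_γ belongs to the Wiener class. -/

import Mathlib

open scoped Real Topology

/-- Alternating fractional binomial coefficients. -/
noncomputable def gcoef (γ : ℝ) (k : ℕ) : ℝ :=
  (-1 : ℝ) ^ k / (Nat.factorial k) * ∏ i ∈ Finset.range k, (γ - i)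

/-- WSGD weights. -/
noncomputable def w (γ : ℝ) : ℕ → ℝ
  | 0 => γ / 2 * gcoef γ 0
  | (k + 1) => γ / 2 * gcoef γ (k + 1) + (2 - γ) / 2 * gcoef γ k

lemma gcoef_succ (γ : ℝ) (k : ℕ) :
    gcoef γ (k+1) = gcoef γ k * ((k : ℝ) - γ) / (k+1) := by
  have hk : ((k:ℝ)+1) ≠ 0 := by positivity
  have hf : (Nat.factorial k : ℝ) ≠ 0 := by positivity
  simp only [gcoef, Finset.prod_range_succ, Nat.factorial_succ, pow_succ, Nat.cast_mul,
    Nat.cast_add, Nat.cast_one]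
  field_simp
  ring

lemma gcoef_shift (γ : ℝ) (k : ℕ) :
    gcoef γ (k+1) = -γ/(k+1) * gcoef (γ-1) k := by
  have hk : ((k:ℝ)+1) ≠ 0 := by positivity
  have hf : (Nat.factorial k : ℝ) ≠ 0 := by positivity
  have hp : ∏ i ∈ Finset.range (k+1), (γ - i) = γ * ∏ i ∈ Finset.range k, (γ - 1 - i) := by
    rw [Finset.prod_range_succ']
    simp only [Nat.cast_add, Nat.cast_one, Nat.cast_zero, sub_zero]
    rw [mul_comm]
    congr 1
    exact Finset.prod_congr rfl (fun i _ => by ring)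
  simp only [gcoef, hp, Nat.factorial_succ, pow_succ, Nat.cast_mul, Nat.cast_add, Nat.cast_one]
  field_simp

lemma sum_gcoef (γ : ℝ) (n : ℕ) :
    ∑ k ∈ Finset.range (n+1), gcoef γ k = gcoef (γ-1) n := by
  induction n with
  | zero => simp [gcoef]
  | succ n ih =>
    rw [Finset.sum_range_succ, ih, gcoef_shift, gcoef_succ]
    have hk : ((n:ℝ)+1) ≠ 0 := by positivity
    field_simp
    ring

lemma gcoef_beta_bound (β : ℝ) (hβ0 : 0 < β) (hβ1 : β < 1) (n : ℕ) :
    -β/(n+1) ≤ gcoef β (n+1) ∧ gcoef β (n+1) ≤ 0 := by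
  induction n with
  | zero =>
    have h : gcoef β 1 = -β := by simp [gcoef]
    rw [h]; norm_num; nlinarith
  | succ n ih =>
    obtain ⟨h1, h2⟩ := ih
    rw [gcoef_succ]
    have hn1 : (0:ℝ) < (n:ℝ)+1 := by positivity
    have hn2 : (0:ℝ) < (n:ℝ)+1+1 := by positivity
    have hfac : (0:ℝ) ≤ ((n:ℝ)+1) - β := by
      have : (1:ℝ) ≤ (n:ℝ)+1 := by
        have := Nat.cast_nonneg (α := ℝ) n; linarith
      linarith
    have hmul : -β ≤ gcoef β (n+1) * (((n:ℝ)+1) - β) := by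
      have h1' : -β ≤ gcoef β (n+1) * ((n:ℝ)+1) := by
        have := (div_le_iff₀ hn1).mp h1
        linarith
      nlinarith
    push_cast
    constructor
    · rw [div_le_div_iff₀ hn2 hn2]
      nlinarith
    · apply div_nonpos_of_nonpos_of_nonneg _ (le_of_lt hn2)
      exact mul_nonpos_of_nonpos_of_nonneg h2 hfac

lemma gcoef_nonneg (γ : ℝ) (hγ1 : 1 < γ) (hγ2 : γ < 2) (k : ℕ) :
    0 ≤ gcoef γ (k+2) := by
  induction k with
  | zero =>
    have h : gcoef γ 2 = γ * (γ - 1) / 2 := by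
      simp [gcoef, Finset.prod_range_succ]
      ring
    rw [h]; nlinarith
  | succ k ih =>
    rw [gcoef_succ]
    have h1 : (0:ℝ) ≤ ((k:ℝ)+2) - γ := by
      have := Nat.cast_nonneg (α := ℝ) k; linarith
    have h2 : (0:ℝ) < (k:ℝ)+2+1 := by positivity
    push_cast
    positivity

lemma tendsto_gcoef_beta (β : ℝ) (hβ0 : 0 < β) (hβ1 : β < 1) :
    Filter.Tendsto (fun n : ℕ => gcoef β n) Filter.atTop (nhds 0) := by
  rw [← Filter.tendsto_add_atTop_iff_nat 1]
  have hlim : Filter.Tendsto (fun n : ℕ => β/((n:ℝ)+1)) Filter.atTop (nhds 0) := by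
    have := (tendsto_const_div_atTop_nhds_zero_nat β).comp (Filter.tendsto_add_atTop_nat 1)
    convert this using 2 with n
    simp [Function.comp]
  apply squeeze_zero_norm (fun n => ?_) hlim
  have h := gcoef_beta_bound β hβ0 hβ1 n
  rw [Real.norm_eq_abs, abs_le]
  have h0 : (0:ℝ) ≤ β/((n:ℝ)+1) := by positivity
  constructor
  · have : -(β/((n:ℝ)+1)) = -β/((n:ℝ)+1) := by ring
    rw [this]; exact h.1
  · linarith [h.2]

lemma hasSum_gcoef (γ : ℝ) (hγ1 : 1 < γ) (hγ2 : γ < 2) :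
    HasSum (fun k : ℕ => gcoef γ k) 0 := by
  have hb0 : 0 < γ - 1 := by linarith
  have hb1 : γ - 1 < 1 := by linarith
  have hsum2 : Summable (fun k : ℕ => gcoef γ (k+2)) := by
    apply summable_of_sum_range_le (c := γ - 1) (fun k => gcoef_nonneg γ hγ1 hγ2 k)
    intro n
    have key : ∑ k ∈ Finset.range n, gcoef γ (k+2)
        = ∑ k ∈ Finset.range (n+2), gcoef γ k - gcoef γ 0 - gcoef γ 1 := by
      rw [Finset.sum_range_succ' (fun k => gcoef γ k) (n+1),
          Finset.sum_range_succ' (fun k => gcoef γ (k+1)) n]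
      ring
    rw [key, sum_gcoef]
    have h0 : gcoef γ 0 = 1 := by simp [gcoef]
    have h1 : gcoef γ 1 = -γ := by simp [gcoef]
    have hle : gcoef (γ-1) (n+1) ≤ 0 := (gcoef_beta_bound _ hb0 hb1 n).2
    rw [h0, h1]; linarith
  have hsum : Summable (fun k : ℕ => gcoef γ k) := (summable_nat_add_iff 2).mp hsum2
  have h := hsum.hasSum
  have ht := h.tendsto_sum_nat
  have ht2 : Filter.Tendsto (fun n : ℕ => ∑ k ∈ Finset.range n, gcoef γ k)
      Filter.atTop (nhds 0) := by
    rw [← Filter.tendsto_add_atTop_iff_nat 1]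
    have heq : (fun n : ℕ => ∑ k ∈ Finset.range (n+1), gcoef γ k)
        = fun n : ℕ => gcoef (γ-1) n := funext (sum_gcoef γ)
    rw [heq]
    exact tendsto_gcoef_beta _ hb0 hb1
  rwa [tendsto_nhds_unique ht ht2] at h

/-- The WSGD weights are absolutely summable with explicit absolute sum
`γ² + γ - 2 + (γ/4)(|γ²+γ-4| - (γ²+γ-4))`; in particular the defining series of
`f_γ(ξ) = -∑_{k=-1}^∞ w_{k+1}^{(γ)} e^{ikξ}` converges absolutely (uniformly in `ξ`),
i.e. `f_γ` belongs to the Wiener class. -/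
theorem wsgd_weights_abs_sum (γ : ℝ) (hγ1 : 1 < γ) (hγ2 : γ < 2) :
    HasSum (fun k : ℕ => |w γ k|)
      (γ ^ 2 + γ - 2 + γ / 4 * (|γ ^ 2 + γ - 4| - (γ ^ 2 + γ - 4))) ∧
    ∀ ξ : ℝ, Summable (fun k : ℕ =>
      ‖(w γ k : ℂ) * Complex.exp (Complex.I * ((k : ℂ) - 1) * (ξ : ℂ))‖) := by
  have h0 : gcoef γ 0 = 1 := by simp [gcoef]
  have h1 : gcoef γ 1 = -γ := by simp [gcoef]
  have h2 : gcoef γ 2 = γ * (γ - 1) / 2 := by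
    simp [gcoef, Finset.prod_range_succ]; ring
  have hg := hasSum_gcoef γ hγ1 hγ2
  -- shifted sequence
  set f : ℕ → ℝ := fun k => match k with | 0 => 0 | (k+1) => gcoef γ k with hf_def
  have hf : HasSum f 0 := by
    have : HasSum (fun n : ℕ => f (n + 1)) 0 := hg
    have := (hasSum_nat_add_iff (f := f) 1).mp this
    simpa [hf_def] using this
  have hw0 : HasSum (fun k : ℕ => w γ k) 0 := by
    have h := (hg.mul_left (γ/2)).add (hf.mul_left ((2-γ)/2))
    simp only [mul_zero, add_zero] at h
    convert h using 1
    case e'_3 => rfl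
    funext k
    match k with
    | 0 => simp [w, hf_def]
    | (k+1) => simp [w, hf_def]
  -- correction
  set a : ℝ := (-2) * w γ 1 with ha_def
  set b : ℝ := |w γ 2| - w γ 2 with hb_def
  have hc : HasSum (fun k : ℕ => (if k = 1 then a else 0) + (if k = 2 then b else 0))
      (a + b) := (hasSum_ite_eq 1 a).add (hasSum_ite_eq 2 b)
  have hw1le : w γ 1 ≤ 0 := by
    show γ / 2 * gcoef γ 1 + (2 - γ) / 2 * gcoef γ 0 ≤ 0
    rw [h0, h1]; nlinarith
  have habs : (fun k : ℕ => |w γ k|)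
      = fun k : ℕ => w γ k + ((if k = 1 then a else 0) + (if k = 2 then b else 0)) := by
    funext k
    match k with
    | 0 =>
      have : w γ 0 = γ/2 := by show γ / 2 * gcoef γ 0 = γ/2; rw [h0]; ring
      simp [this, abs_of_nonneg (by linarith : (0:ℝ) ≤ γ/2)]
    | 1 => rw [abs_of_nonpos hw1le]; simp [ha_def]; ring
    | 2 => simp [hb_def]
    | (k+3) =>
      have hwk : 0 ≤ w γ (k+3) := by
        show 0 ≤ γ / 2 * gcoef γ (k+3) + (2 - γ) / 2 * gcoef γ (k+2)
        have g1 := gcoef_nonneg γ hγ1 hγ2 (k+1)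
        have g2 := gcoef_nonneg γ hγ1 hγ2 k
        nlinarith
      simp [abs_of_nonneg hwk]
  have hsum : HasSum (fun k : ℕ => |w γ k|) (0 + (a + b)) := by
    rw [habs]; exact hw0.add hc
  have hval : 0 + (a + b) = γ ^ 2 + γ - 2 + γ / 4 * (|γ ^ 2 + γ - 4| - (γ ^ 2 + γ - 4)) := by
    have hw1 : w γ 1 = (2 - γ - γ^2)/2 := by
      show γ / 2 * gcoef γ 1 + (2 - γ) / 2 * gcoef γ 0 = _
      rw [h0, h1]; ring
    have hw2 : w γ 2 = γ/4 * (γ^2 + γ - 4) := by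
      show γ / 2 * gcoef γ 2 + (2 - γ) / 2 * gcoef γ 1 = _
      rw [h1, h2]; ring
    have habs2 : |w γ 2| = γ/4 * |γ^2 + γ - 4| := by
      rw [hw2, abs_mul, abs_of_pos (by linarith : (0:ℝ) < γ/4)]
    rw [ha_def, hb_def, habs2, hw1, hw2]; ring
  rw [hval] at hsum
  refine ⟨hsum, fun ξ => ?_⟩
  have : (fun k : ℕ => ‖(w γ k : ℂ) * Complex.exp (Complex.I * ((k : ℂ) - 1) * (ξ : ℂ))‖)
      = fun k : ℕ => |w γ k| := by
    funext k
    rw [norm_mul, Complex.norm_real]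
    have : ‖Complex.exp (Complex.I * ((k : ℂ) - 1) * (ξ : ℂ))‖ = 1 := by
      rw [Complex.norm_exp]
      simp
    rw [this, mul_one, Real.norm_eq_abs]
  rw [this]
  exact hsum.summable
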